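/- The relative entropy of IQ coherence is additive on tensor products: C^{A1A2|B1B2}_r(ρ_{A1B1} ⊗ ρ_{A2B2}) = C^{A1|B1}_r(ρ_{A1B1}) + C^{A2|B2}_r(ρ_{A2B2}). -/

import Mathlib

open scoped BigOperators ComplexOrder Kronecker

/-- Trace norm: `‖P‖_tr = Tr √(Pᴴ P)`. -/
noncomputable def traceNorm {n : Type*} [Fintype n] [DecidableEq n] (P : Matrix n n ℂ) : ℝ :=
  (((Matrix.posSemidef_conjTranspose_mul_self P).1.eigenvectorUnitary.1 *
      Matrix.diagonal (((↑) : ℝ → ℂ) ∘ (Real.sqrt ·) ∘ (Matrix.posSemidef_conjTranspose_mul_self P).1.eigenvalues) *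
      (star (Matrix.posSemidef_conjTranspose_mul_self P).1.eigenvectorUnitary : Matrix n n ℂ)).trace).re

/-- Von Neumann entropy S(ρ) = −Tr ρ log ρ, via the eigenvalues of a Hermitian matrix
(junk value 0 for non-Hermitian input). -/
noncomputable def vN {n : Type*} [Fintype n] [DecidableEq n] (ρ : Matrix n n ℂ) : ℝ :=
  if h : ρ.IsHermitian then -∑ i, h.eigenvalues i * Real.log (h.eigenvalues i) else 0

/-- Dephasing channel Δ_A on the A-factor of H_A ⊗ H_B (in the fixed basis of A). -/
def dephA {A B : Type*} [DecidableEq A] (ρ : Matrix (A × B) (A × B) ℂ) :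
    Matrix (A × B) (A × B) ℂ :=
  fun p q => if p.1 = q.1 then ρ p q else 0

/-- Relative entropy of IQ coherence, C^{A|B}_r(ρ) = S(Δ_A(ρ)) − S(ρ). -/
noncomputable def CrIQ {A B : Type*} [Fintype A] [Fintype B] [DecidableEq A] [DecidableEq B]
    (ρ : Matrix (A × B) (A × B) ℂ) : ℝ :=
  vN (dephA ρ) - vN ρ
/-- Tensor product of bipartite operators, with the A-systems and B-systems grouped. -/
def tensBip {A₁ B₁ A₂ B₂ : Type*} (ρ₁ : Matrix (A₁ × B₁) (A₁ × B₁) ℂ)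
    (ρ₂ : Matrix (A₂ × B₂) (A₂ × B₂) ℂ) :
    Matrix ((A₁ × A₂) × (B₁ × B₂)) ((A₁ × A₂) × (B₁ × B₂)) ℂ :=
  fun p q => ρ₁ (p.1.1, p.2.1) (q.1.1, q.2.1) * ρ₂ (p.1.2, p.2.2) (q.1.2, q.2.2)

namespace CrIQAux

open Matrix Polynomial

section Spectral

variable {n : Type*} [Fintype n] [DecidableEq n]

lemma charpoly_conj_unitary (V D : Matrix n n ℂ) (hV : V ∈ Matrix.unitaryGroup n ℂ) :
    (V * D * Vᴴ).charpoly = D.charpoly := by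
  have h1 : V * Vᴴ = 1 := by
    simpa [Matrix.star_eq_conjTranspose] using Matrix.mem_unitaryGroup_iff.mp hV
  have h2 : Vᴴ * V = 1 := by
    simpa [Matrix.star_eq_conjTranspose] using Matrix.mem_unitaryGroup_iff'.mp hV
  have hVW : (C : ℂ →+* ℂ[X]).mapMatrix V * (C : ℂ →+* ℂ[X]).mapMatrix Vᴴ = 1 := by
    rw [← _root_.map_mul, h1, _root_.map_one]
  have hWV : (C : ℂ →+* ℂ[X]).mapMatrix Vᴴ * (C : ℂ →+* ℂ[X]).mapMatrix V = 1 := by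
    rw [← _root_.map_mul, h2, _root_.map_one]
  have key : charmatrix (V * D * Vᴴ) =
      (C : ℂ →+* ℂ[X]).mapMatrix V * charmatrix D * (C : ℂ →+* ℂ[X]).mapMatrix Vᴴ := by
    unfold Matrix.charmatrix
    rw [_root_.map_mul, _root_.map_mul, Matrix.mul_sub, Matrix.sub_mul]
    congr 1
    have hc := Matrix.scalar_commute (X : ℂ[X]) (fun r' => Commute.all _ _)
      ((C : ℂ →+* ℂ[X]).mapMatrix V)
    rw [← hc, mul_assoc, hVW, mul_one]
  rw [Matrix.charpoly, Matrix.charpoly, key, Matrix.det_mul, Matrix.det_mul,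
    mul_comm, ← mul_assoc, ← Matrix.det_mul, hWV, Matrix.det_one, one_mul]

lemma charpoly_diag (d : n → ℂ) :
    (Matrix.diagonal d).charpoly = ∏ i, (X - Polynomial.C (d i)) := by
  have : (Matrix.diagonal d).charmatrix
      = Matrix.diagonal (fun i => X - Polynomial.C (d i)) := by
    ext i j
    by_cases h : i = j <;> simp [Matrix.charmatrix_apply, Matrix.diagonal_apply, h]
  rw [Matrix.charpoly, this, Matrix.det_diagonal]

lemma herm_of_decomp (V : Matrix n n ℂ) (d : n → ℝ) :
    (V * Matrix.diagonal (fun i => (d i : ℂ)) * Vᴴ).IsHermitian := by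
  apply Matrix.isHermitian_mul_mul_conjTranspose
  have hs : (star fun i => ((d i : ℝ) : ℂ)) = fun i => ((d i : ℝ) : ℂ) := by
    funext i
    exact Complex.conj_ofReal _
  rw [Matrix.IsHermitian, Matrix.diagonal_conjTranspose, hs]

lemma eig_multiset {M : Matrix n n ℂ} (hM : M.IsHermitian) {V : Matrix n n ℂ}
    (hV : V ∈ Matrix.unitaryGroup n ℂ) {d : n → ℝ}
    (hdec : M = V * Matrix.diagonal (fun i => (d i : ℂ)) * Vᴴ) :
    (Finset.univ.val.map fun i => ((hM.eigenvalues i : ℝ) : ℂ))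
      = Finset.univ.val.map fun i => ((d i : ℝ) : ℂ) := by
  have h1 : M.charpoly = ∏ i, (X - Polynomial.C ((d i : ℂ))) := by
    rw [hdec, charpoly_conj_unitary _ _ hV, charpoly_diag]
  have h2 : M.charpoly = ∏ i, (X - Polynomial.C ((hM.eigenvalues i : ℂ))) := by
    conv_lhs => rw [hM.spectral_theorem, Unitary.conjStarAlgAut_apply]
    rw [show (star (hM.eigenvectorUnitary : Matrix n n ℂ))
        = (hM.eigenvectorUnitary : Matrix n n ℂ)ᴴ from rfl,
      charpoly_conj_unitary _ _ hM.eigenvectorUnitary.2]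
    rw [show (RCLike.ofReal ∘ hM.eigenvalues : n → ℂ)
        = fun i => ((hM.eigenvalues i : ℝ) : ℂ) from rfl, charpoly_diag]
  have h3 : (∏ i, (X - Polynomial.C ((hM.eigenvalues i : ℂ))))
      = ∏ i, (X - Polynomial.C ((d i : ℂ))) := h2.symm.trans h1
  have h4 := congrArg Polynomial.roots h3
  rwa [Finset.prod_eq_multiset_prod, Finset.prod_eq_multiset_prod,
    show (Finset.univ.val.map fun i => X - Polynomial.C ((hM.eigenvalues i : ℂ)))
      = (Finset.univ.val.map fun i => ((hM.eigenvalues i : ℝ) : ℂ)).map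
          (fun a => X - Polynomial.C a) from by rw [Multiset.map_map]; rfl,
    show (Finset.univ.val.map fun i => X - Polynomial.C ((d i : ℂ)))
      = (Finset.univ.val.map fun i => ((d i : ℝ) : ℂ)).map
          (fun a => X - Polynomial.C a) from by rw [Multiset.map_map]; rfl,
    Polynomial.roots_multiset_prod_X_sub_C, Polynomial.roots_multiset_prod_X_sub_C] at h4

lemma sum_g_eig {M : Matrix n n ℂ} (hM : M.IsHermitian) {V : Matrix n n ℂ}
    (hV : V ∈ Matrix.unitaryGroup n ℂ) {d : n → ℝ}
    (hdec : M = V * Matrix.diagonal (fun i => (d i : ℂ)) * Vᴴ) (g : ℂ → ℝ) :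
    ∑ i, g ((hM.eigenvalues i : ℂ)) = ∑ i, g ((d i : ℂ)) := by
  have h := congrArg (fun s => (Multiset.map g s).sum) (eig_multiset hM hV hdec)
  simp only [Multiset.map_map] at h
  rw [Finset.sum_eq_multiset_sum, Finset.sum_eq_multiset_sum]
  exact h

lemma vN_of_decomp {M : Matrix n n ℂ} {V : Matrix n n ℂ}
    (hV : V ∈ Matrix.unitaryGroup n ℂ) {d : n → ℝ}
    (hdec : M = V * Matrix.diagonal (fun i => (d i : ℂ)) * Vᴴ) :
    vN M = -∑ i, d i * Real.log (d i) := by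
  have hM : M.IsHermitian := hdec ▸ herm_of_decomp V d
  rw [vN, dif_pos hM]
  congr 1
  have h := sum_g_eig hM hV hdec (fun z => z.re * Real.log z.re)
  simpa using h

lemma sum_eigenvalues_eq_trace {M : Matrix n n ℂ} (hM : M.IsHermitian) :
    (∑ i, ((hM.eigenvalues i : ℝ) : ℂ)) = M.trace := by
  conv_rhs => rw [hM.spectral_theorem, Unitary.conjStarAlgAut_apply]
  rw [Matrix.trace_mul_comm, ← mul_assoc, Unitary.coe_star_mul_self, one_mul,
    Matrix.trace_diagonal]
  rfl

end Spectral

/-- The shuffle equivalence regrouping `(A₁×B₁)×(A₂×B₂)` as `(A₁×A₂)×(B₁×B₂)`. -/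
def shuffle (A₁ B₁ A₂ B₂ : Type*) : (A₁ × B₁) × (A₂ × B₂) ≃ (A₁ × A₂) × (B₁ × B₂) where
  toFun p := ((p.1.1, p.2.1), (p.1.2, p.2.2))
  invFun p := ((p.1.1, p.2.1), (p.1.2, p.2.2))
  left_inv _ := rfl
  right_inv _ := rfl

lemma mul_log_mul (a b : ℝ) :
    (a * b) * Real.log (a * b) = (a * Real.log a) * b + a * (b * Real.log b) := by
  rcases eq_or_ne a 0 with ha | ha
  · simp [ha]
  rcases eq_or_ne b 0 with hb | hb
  · simp [hb]
  rw [Real.log_mul ha hb]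
  ring

section Tens

variable {A₁ B₁ A₂ B₂ : Type*} [Fintype A₁] [Fintype B₁] [Fintype A₂] [Fintype B₂]
    [DecidableEq A₁] [DecidableEq B₁] [DecidableEq A₂] [DecidableEq B₂]

lemma tensBip_eq (ρ₁ : Matrix (A₁ × B₁) (A₁ × B₁) ℂ) (ρ₂ : Matrix (A₂ × B₂) (A₂ × B₂) ℂ) :
    tensBip ρ₁ ρ₂ = Matrix.reindex (shuffle A₁ B₁ A₂ B₂) (shuffle A₁ B₁ A₂ B₂) (ρ₁ ⊗ₖ ρ₂) := rfl

lemma kron_conjT {α β : Type*} (M : Matrix α α ℂ) (N : Matrix β β ℂ) :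
    (M ⊗ₖ N)ᴴ = Mᴴ ⊗ₖ Nᴴ := by
  ext p q
  simp [Matrix.conjTranspose_apply, Matrix.kroneckerMap_apply, mul_comm]

lemma reindex_mul {α β : Type*} [Fintype α] [Fintype β] (σ : α ≃ β) (M N : Matrix α α ℂ) :
    Matrix.reindex σ σ (M * N) = Matrix.reindex σ σ M * Matrix.reindex σ σ N := by
  simp [Matrix.reindex_apply, Matrix.submatrix_mul_equiv]

lemma reindex_diag {α β : Type*} [DecidableEq α] [DecidableEq β] (σ : α ≃ β) (d : α → ℂ) :
    Matrix.reindex σ σ (Matrix.diagonal d) = Matrix.diagonal (fun p => d (σ.symm p)) := by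
  simp [Matrix.reindex_apply, Matrix.submatrix_diagonal_equiv]

lemma reindex_conjT {α β : Type*} (σ : α ≃ β) (M : Matrix α α ℂ) :
    (Matrix.reindex σ σ M)ᴴ = Matrix.reindex σ σ Mᴴ := by
  simp [Matrix.reindex_apply, Matrix.conjTranspose_submatrix]

/-- Additivity of the von Neumann entropy on tensor products of unit-trace Hermitian matrices. -/
lemma vN_tens (ρ₁ : Matrix (A₁ × B₁) (A₁ × B₁) ℂ) (ρ₂ : Matrix (A₂ × B₂) (A₂ × B₂) ℂ)
    (h₁ : ρ₁.IsHermitian) (t₁ : ρ₁.trace = 1)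
    (h₂ : ρ₂.IsHermitian) (t₂ : ρ₂.trace = 1) :
    vN (tensBip ρ₁ ρ₂) = vN ρ₁ + vN ρ₂ := by
  classical
  set σ := shuffle A₁ B₁ A₂ B₂ with hσ
  set U₁ := (h₁.eigenvectorUnitary : Matrix (A₁ × B₁) (A₁ × B₁) ℂ) with hU₁
  set U₂ := (h₂.eigenvectorUnitary : Matrix (A₂ × B₂) (A₂ × B₂) ℂ) with hU₂
  set a := h₁.eigenvalues with hadef
  set b := h₂.eigenvalues with hbdef
  have e₁ : ρ₁ = U₁ * Matrix.diagonal (fun i => ((a i : ℝ) : ℂ)) * U₁ᴴ := h₁.spectral_theorem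
  have e₂ : ρ₂ = U₂ * Matrix.diagonal (fun i => ((b i : ℝ) : ℂ)) * U₂ᴴ := h₂.spectral_theorem
  set V := Matrix.reindex σ σ (U₁ ⊗ₖ U₂) with hVdef
  have hu₁ : U₁ * U₁ᴴ = 1 := by
    simpa [Matrix.star_eq_conjTranspose] using
      Matrix.mem_unitaryGroup_iff.mp h₁.eigenvectorUnitary.2
  have hu₂ : U₂ * U₂ᴴ = 1 := by
    simpa [Matrix.star_eq_conjTranspose] using
      Matrix.mem_unitaryGroup_iff.mp h₂.eigenvectorUnitary.2
  have hV : V ∈ Matrix.unitaryGroup ((A₁ × A₂) × (B₁ × B₂)) ℂ := by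
    rw [Matrix.mem_unitaryGroup_iff]
    have : star V = Vᴴ := rfl
    rw [this, hVdef, reindex_conjT, kron_conjT, ← reindex_mul, ← Matrix.mul_kronecker_mul,
      hu₁, hu₂, Matrix.one_kronecker_one, Matrix.reindex_apply, Matrix.submatrix_one_equiv]
  set dfun : (A₁ × A₂) × (B₁ × B₂) → ℝ :=
    fun p => a (σ.symm p).1 * b (σ.symm p).2 with hdfun
  have hdiagfun : (fun p => ((dfun p : ℝ) : ℂ))
      = fun p => ((fun q : (A₁ × B₁) × (A₂ × B₂) => ((a q.1 : ℂ) * (b q.2 : ℂ))) (σ.symm p)) := by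
    funext p
    rw [hdfun]
    push_cast
    rfl
  have hdec : tensBip ρ₁ ρ₂ = V * Matrix.diagonal (fun p => ((dfun p : ℝ) : ℂ)) * Vᴴ := by
    rw [tensBip_eq]
    conv_lhs => rw [e₁, e₂]
    rw [Matrix.mul_kronecker_mul, Matrix.mul_kronecker_mul, ← kron_conjT,
      Matrix.diagonal_kronecker_diagonal, reindex_mul, reindex_mul, reindex_diag,
      hdiagfun, ← reindex_conjT]
  have hvNt := vN_of_decomp hV hdec
  have hvN₁ := vN_of_decomp h₁.eigenvectorUnitary.2 e₁
  have hvN₂ := vN_of_decomp h₂.eigenvectorUnitary.2 e₂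
  have ha1 : ∑ i, a i = 1 := by
    have h := (sum_eigenvalues_eq_trace h₁).trans t₁
    exact_mod_cast h
  have hb1 : ∑ i, b i = 1 := by
    have h := (sum_eigenvalues_eq_trace h₂).trans t₂
    exact_mod_cast h
  rw [hvNt, hvN₁, hvN₂]
  have hsum : ∑ p, dfun p * Real.log (dfun p)
      = ∑ q : (A₁ × B₁) × (A₂ × B₂), (a q.1 * b q.2) * Real.log (a q.1 * b q.2) :=
    Equiv.sum_comp σ.symm (fun q => (a q.1 * b q.2) * Real.log (a q.1 * b q.2))
  have key : ∑ i, ∑ j, (a i * b j) * Real.log (a i * b j)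
      = (∑ i, a i * Real.log (a i)) + (∑ j, b j * Real.log (b j)) := by
    have hrow : ∀ i, ∑ j, (a i * b j) * Real.log (a i * b j)
        = a i * Real.log (a i) + a i * ∑ j, b j * Real.log (b j) := by
      intro i
      calc ∑ j, (a i * b j) * Real.log (a i * b j)
          = ∑ j, ((a i * Real.log (a i)) * b j + a i * (b j * Real.log (b j))) :=
            Finset.sum_congr rfl (fun j _ => mul_log_mul _ _)
        _ = (a i * Real.log (a i)) * ∑ j, b j
            + a i * ∑ j, b j * Real.log (b j) := by
            rw [Finset.sum_add_distrib, ← Finset.mul_sum, ← Finset.mul_sum]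
        _ = a i * Real.log (a i) + a i * ∑ j, b j * Real.log (b j) := by
            rw [hb1, mul_one]
    rw [Finset.sum_congr rfl (fun i _ => hrow i), Finset.sum_add_distrib,
      ← Finset.sum_mul, ha1, one_mul]
  rw [hsum, Fintype.sum_prod_type, key]
  ring

end Tens

section Deph

variable {A B : Type*} [Fintype A] [Fintype B] [DecidableEq A] [DecidableEq B]

lemma dephA_herm {ρ : Matrix (A × B) (A × B) ℂ} (h : ρ.IsHermitian) :
    (dephA ρ).IsHermitian := by
  ext i j
  simp only [Matrix.conjTranspose_apply, dephA]
  by_cases hij : i.1 = j.1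
  · rw [if_pos hij.symm, if_pos hij, ← Matrix.conjTranspose_apply, h.eq]
  · rw [if_neg (Ne.symm hij), if_neg hij, star_zero]

lemma dephA_trace (ρ : Matrix (A × B) (A × B) ℂ) : (dephA ρ).trace = ρ.trace := by
  simp [Matrix.trace, Matrix.diag, dephA]

end Deph

lemma dephA_tensBip {A₁ B₁ A₂ B₂ : Type*} [DecidableEq A₁] [DecidableEq A₂]
    (ρ₁ : Matrix (A₁ × B₁) (A₁ × B₁) ℂ) (ρ₂ : Matrix (A₂ × B₂) (A₂ × B₂) ℂ) :
    dephA (tensBip ρ₁ ρ₂) = tensBip (dephA ρ₁) (dephA ρ₂) := by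
  funext p q
  simp only [dephA, tensBip]
  by_cases h1 : p.1.1 = q.1.1 <;> by_cases h2 : p.1.2 = q.1.2 <;>
    simp [Prod.ext_iff, h1, h2]

end CrIQAux

/-- additivity of the relative entropy of IQ coherence:
C^{A₁A₂|B₁B₂}_r(ρ₁ ⊗ ρ₂) = C^{A₁|B₁}_r(ρ₁) + C^{A₂|B₂}_r(ρ₂). -/
theorem CrIQ_additive {A₁ B₁ A₂ B₂ : Type*} [Fintype A₁] [Fintype B₁] [Fintype A₂] [Fintype B₂]
    [DecidableEq A₁] [DecidableEq B₁] [DecidableEq A₂] [DecidableEq B₂]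
    (ρ₁ : Matrix (A₁ × B₁) (A₁ × B₁) ℂ) (ρ₂ : Matrix (A₂ × B₂) (A₂ × B₂) ℂ)
    (hρ₁ : ρ₁.PosSemidef) (hTr₁ : ρ₁.trace = 1)
    (hρ₂ : ρ₂.PosSemidef) (hTr₂ : ρ₂.trace = 1) :
    CrIQ (tensBip ρ₁ ρ₂) = CrIQ ρ₁ + CrIQ ρ₂ := by
  simp only [CrIQ]
  rw [CrIQAux.dephA_tensBip,
    CrIQAux.vN_tens (dephA ρ₁) (dephA ρ₂) (CrIQAux.dephA_herm hρ₁.1)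
      ((CrIQAux.dephA_trace ρ₁).trans hTr₁) (CrIQAux.dephA_herm hρ₂.1)
      ((CrIQAux.dephA_trace ρ₂).trans hTr₂),
    CrIQAux.vN_tens ρ₁ ρ₂ hρ₁.1 hTr₁ hρ₂.1 hTr₂]
  ring
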